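/- arXiv:1406.4534 — 4 statements merged into one kernel-verified Lean document; each statement's English description precedes it below -/
import Mathlib

section
/- Let C ≤ SL_3(R) be the group of positive diagonal matrices diag(a, b, 1/(ab)) with a, b > 0, and let P_n be the matrix with rows (1, n, 0), (0, 1, 0), (0, 0, 1). Then the conjugates P_n C P_n^{-1} converge, as n → ∞, to the group F = { diag-block matrices with rows (a, t, 0), (0, a, 0), (0, 0, 1/a²) : a > 0, t ∈ R }, in the sense that: (a) every element of F is a limit of a sequence with n-th term in P_n C P_n^{-1}, and (b) every convergent subsequence of elements of P_n C P_n^{-1} has limit in F. -/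
open Filter Topology Matrix

/-- Convergence of a sequence of subsets (subgroups) of a topological space:
(a) every element of `L` is a limit of a sequence with `n`-th term in `H n`;
(b) every subsequential limit of such sequences lies in `L`. -/
def SubgroupConverges {M : Type*} [TopologicalSpace M]
    (H : ℕ → Set M) (L : Set M) : Prop :=
  (∀ l ∈ L, ∃ h : ℕ → M, (∀ n, h n ∈ H n) ∧ Tendsto h atTop (𝓝 l)) ∧
  (∀ h : ℕ → M, (∀ n, h n ∈ H n) → ∀ φ : ℕ → ℕ, StrictMono φ → ∀ l : M,
    Tendsto (h ∘ φ) atTop (𝓝 l) → l ∈ L)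

/-- The positive diagonal Cartan subgroup of SL₃(ℝ), as a set of matrices. -/
def CartanC : Set (Matrix (Fin 3) (Fin 3) ℝ) :=
  {M | ∃ a b : ℝ, 0 < a ∧ 0 < b ∧ M = Matrix.diagonal ![a, b, 1 / (a * b)]}

noncomputable def P3 (n : ℕ) : Matrix (Fin 3) (Fin 3) ℝ :=
  !![1, (n : ℝ), 0; 0, 1, 0; 0, 0, 1]

def groupF : Set (Matrix (Fin 3) (Fin 3) ℝ) :=
  {M | ∃ a t : ℝ, 0 < a ∧ M = !![a, t, 0; 0, a, 0; 0, 0, 1 / a ^ 2]}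

lemma P3_inv (n : ℕ) : (P3 n)⁻¹ = !![1, -(n : ℝ), 0; 0, 1, 0; 0, 0, 1] := by
  apply Matrix.inv_eq_right_inv
  simp [P3, Matrix.mul_fin_three, Matrix.one_fin_three]

lemma conj_diag (n : ℕ) (a b c : ℝ) :
    P3 n * Matrix.diagonal ![a, b, c] * (P3 n)⁻¹ =
      !![a, (n : ℝ) * (b - a), 0; 0, b, 0; 0, 0, c] := by
  have hd : (Matrix.diagonal ![a, b, c] : Matrix (Fin 3) (Fin 3) ℝ)
      = !![a, 0, 0; 0, b, 0; 0, 0, c] := by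
    ext i j
    fin_cases i <;> fin_cases j <;> simp [Matrix.diagonal, Matrix.vecHead, Matrix.vecTail]
  rw [P3_inv, hd]
  simp [P3, Matrix.mul_fin_three]
  ring_nf

lemma tendsto_matrix_of_entries {h : ℕ → Matrix (Fin 3) (Fin 3) ℝ}
    {l : Matrix (Fin 3) (Fin 3) ℝ}
    (he : ∀ i j, Tendsto (fun n => h n i j) atTop (𝓝 (l i j))) :
    Tendsto h atTop (𝓝 l) := by
  refine tendsto_pi_nhds.2 fun i => ?_
  exact tendsto_pi_nhds.2 (he i)

lemma entries_tendsto {h : ℕ → Matrix (Fin 3) (Fin 3) ℝ}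
    {l : Matrix (Fin 3) (Fin 3) ℝ} (hl : Tendsto h atTop (𝓝 l)) (i j : Fin 3) :
    Tendsto (fun n => h n i j) atTop (𝓝 (l i j)) := by
  have : Continuous fun M : Matrix (Fin 3) (Fin 3) ℝ => M i j :=
    (continuous_apply j).comp (continuous_apply i)
  exact this.continuousAt.tendsto.comp hl

/-- `P_n C P_n⁻¹` converges to the group `F`. -/
theorem cartan_conj_converges_to_F :
    SubgroupConverges
      (fun n => (fun M => P3 n * M * (P3 n)⁻¹) '' CartanC) groupF := by
  constructor
  · -- part (a)
    rintro l ⟨a, t, ha, rfl⟩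
    set b : ℕ → ℝ := fun n => max (a + t / n) (a / 2) with hbdef
    have hb : ∀ n, 0 < b n := fun n => lt_max_of_lt_right (by linarith)
    refine ⟨fun n => !![a, (n : ℝ) * (b n - a), 0; 0, b n, 0; 0, 0, 1 / (a * b n)],
      fun n => ⟨Matrix.diagonal ![a, b n, 1 / (a * b n)],
        ⟨a, b n, ha, hb n, rfl⟩, conj_diag n a (b n) (1 / (a * b n))⟩, ?_⟩
    have hts : Tendsto (fun n : ℕ => t / n) atTop (𝓝 0) :=
      tendsto_const_div_atTop_nhds_zero_nat t
    have hev : ∀ᶠ n : ℕ in atTop, b n = a + t / n ∧ (n : ℝ) * (b n - a) = t := by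
      filter_upwards [hts.eventually (eventually_gt_nhds (show -(a/2) < 0 by linarith)),
        eventually_ge_atTop 1] with n h1 h2
      have hbn : b n = a + t / n := max_eq_left (by linarith)
      have hn : (n : ℝ) ≠ 0 := Nat.cast_ne_zero.mpr (by omega)
      refine ⟨hbn, ?_⟩
      rw [hbn]
      field_simp
      ring
    have hbt : Tendsto b atTop (𝓝 a) := by
      have : Tendsto (fun n : ℕ => a + t / n) atTop (𝓝 (a + 0)) :=
        tendsto_const_nhds.add hts
      rw [add_zero] at this
      exact this.congr' (by filter_upwards [hev] with n hn using hn.1.symm)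
    apply tendsto_matrix_of_entries
    intro i j
    fin_cases i <;> fin_cases j <;> simp
    · exact ((tendsto_const_nhds (x := t)).congr'
        (by filter_upwards [hev] with n hn using hn.2.symm))
    · exact hbt
    · have h1 : Tendsto (fun n => a * b n) atTop (𝓝 (a * a)) := tendsto_const_nhds.mul hbt
      have h2 := h1.inv₀ (by positivity)
      have h3 : (a * a)⁻¹ = (a ^ 2)⁻¹ := by ring_nf
      rw [h3] at h2
      exact h2.congr fun n => by rw [mul_inv]; ring
  · -- part (b)
    intro h hmem φ hφ l hl
    have key : ∀ n, ∃ p : ℝ × ℝ, 0 < p.1 ∧ 0 < p.2 ∧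
        h n = !![p.1, (n : ℝ) * (p.2 - p.1), 0; 0, p.2, 0; 0, 0, 1 / (p.1 * p.2)] := by
      intro n
      obtain ⟨M, ⟨a, b, ha, hb, rfl⟩, hM⟩ := hmem n
      refine ⟨(a, b), ha, hb, ?_⟩
      rw [← hM]
      exact conj_diag n a b (1 / (a * b))
    choose p hp1 hp2 hp3 using key
    set a : ℕ → ℝ := fun n => (p n).1
    set b : ℕ → ℝ := fun n => (p n).2
    have e := fun i j => entries_tendsto hl i j
    have ha : Tendsto (fun n => a (φ n)) atTop (𝓝 (l 0 0)) := by
      have := e 0 0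
      refine this.congr fun n => ?_
      simp [Function.comp, hp3 (φ n), a, b]
    have hb : Tendsto (fun n => b (φ n)) atTop (𝓝 (l 1 1)) := by
      have := e 1 1
      refine this.congr fun n => ?_
      simp [Function.comp, hp3 (φ n), a, b]
    have hT : Tendsto (fun n => (φ n : ℝ) * (b (φ n) - a (φ n))) atTop (𝓝 (l 0 1)) := by
      have := e 0 1
      refine this.congr fun n => ?_
      simp [Function.comp, hp3 (φ n), a, b]
    have hinv : Tendsto (fun n => 1 / (a (φ n) * b (φ n))) atTop (𝓝 (l 2 2)) := by
      have := e 2 2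
      refine this.congr fun n => ?_
      simp [Function.comp, hp3 (φ n), a, b]
    -- b - a → 0
    have hφ_top : Tendsto (fun n => (φ n : ℝ)) atTop atTop :=
      tendsto_natCast_atTop_atTop.comp hφ.tendsto_atTop
    have hdiff : Tendsto (fun n => b (φ n) - a (φ n)) atTop (𝓝 0) := by
      have h1 : Tendsto (fun n => (φ n : ℝ)⁻¹) atTop (𝓝 0) := hφ_top.inv_tendsto_atTop
      have h2 := hT.mul h1
      rw [mul_zero] at h2
      refine h2.congr' ?_
      filter_upwards [hφ_top.eventually_gt_atTop 0] with n hn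
      field_simp
    -- l 1 1 = l 0 0
    have hba : l 1 1 = l 0 0 := by
      have : Tendsto (fun n => (b (φ n) - a (φ n)) + a (φ n)) atTop (𝓝 (0 + l 0 0)) :=
        hdiff.add ha
      rw [zero_add] at this
      exact tendsto_nhds_unique (hb.congr fun n => by ring) this
    -- A := l 0 0 is positive and l 2 2 = 1 / A ^ 2
    have hprod : Tendsto (fun n => (a (φ n) * b (φ n)) * (1 / (a (φ n) * b (φ n))))
        atTop (𝓝 ((l 0 0 * l 1 1) * l 2 2)) := ((ha.mul hb).mul hinv)
    have hone : (l 0 0 * l 1 1) * l 2 2 = 1 := by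
      have hc : Tendsto (fun n => (a (φ n) * b (φ n)) * (1 / (a (φ n) * b (φ n))))
          atTop (𝓝 1) := by
        refine tendsto_const_nhds.congr fun n => ?_
        have : a (φ n) * b (φ n) ≠ 0 := by
          have := hp1 (φ n); have := hp2 (φ n); positivity
        rw [mul_one_div, div_self this]
      exact tendsto_nhds_unique hprod hc
    have hA0 : 0 ≤ l 0 0 := ge_of_tendsto' ha fun n => (hp1 (φ n)).le
    have hAne : l 0 0 ≠ 0 := by
      intro h0
      rw [h0] at hone
      simp at hone
    have hApos : 0 < l 0 0 := lt_of_le_of_ne hA0 (Ne.symm hAne)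
    have hl22 : l 2 2 = 1 / (l 0 0) ^ 2 := by
      rw [hba] at hone
      field_simp
      nlinarith [hone]
    have hzero : ∀ i j : Fin 3, (∀ n, h (φ n) i j = 0) → l i j = 0 := by
      intro i j hz
      have : Tendsto (fun _ : ℕ => (0 : ℝ)) atTop (𝓝 (l i j)) :=
        (e i j).congr fun n => (hz n)
      exact (tendsto_nhds_unique this tendsto_const_nhds)
    refine ⟨l 0 0, l 0 1, hApos, ?_⟩
    have z02 : l 0 2 = 0 := hzero 0 2 fun n => by simp [hp3 (φ n), Matrix.vecHead, Matrix.vecTail]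
    have z10 : l 1 0 = 0 := hzero 1 0 fun n => by simp [hp3 (φ n), Matrix.vecHead, Matrix.vecTail]
    have z12 : l 1 2 = 0 := hzero 1 2 fun n => by simp [hp3 (φ n), Matrix.vecHead, Matrix.vecTail]
    have z20 : l 2 0 = 0 := hzero 2 0 fun n => by simp [hp3 (φ n), Matrix.vecHead, Matrix.vecTail]
    have z21 : l 2 1 = 0 := hzero 2 1 fun n => by simp [hp3 (φ n), Matrix.vecHead, Matrix.vecTail]
    ext i j
    fin_cases i <;> fin_cases j <;>
      simp [hba, hl22, z02, z10, z12, z20, z21, Matrix.vecHead, Matrix.vecTail]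
end

section
/- The five subgroups C, F, N_1, N_2, N_3 of SL_3(R) are pairwise non-conjugate in GL_3(R), where C = { diag(a,b,1/(ab)) : a,b > 0 }, F = { rows (a,t,0),(0,a,0),(0,0,1/a²) : a>0, t ∈ R }, N_1 = { rows (1,s,t),(0,1,s),(0,0,1) }, N_2 = { rows (1,s,t),(0,1,0),(0,0,1) }, N_3 = { rows (1,0,t),(0,1,s),(0,0,1) }. -/
open Matrix

def groupN1 : Set (Matrix (Fin 3) (Fin 3) ℝ) :=
  {M | ∃ s t : ℝ, M = !![1, s, t; 0, 1, s; 0, 0, 1]}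

def groupN2 : Set (Matrix (Fin 3) (Fin 3) ℝ) :=
  {M | ∃ s t : ℝ, M = !![1, s, t; 0, 1, 0; 0, 0, 1]}

def groupN3 : Set (Matrix (Fin 3) (Fin 3) ℝ) :=
  {M | ∃ s t : ℝ, M = !![1, 0, t; 0, 1, s; 0, 0, 1]}

/-- Two subsets of matrices are conjugate in `GL₃(ℝ)`. -/
def IsGLConjugate (H K : Set (Matrix (Fin 3) (Fin 3) ℝ)) : Prop :=
  ∃ P : GL (Fin 3) ℝ,
    (fun M => (P : Matrix (Fin 3) (Fin 3) ℝ) * M *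
      ((P⁻¹ : GL (Fin 3) ℝ) : Matrix (Fin 3) (Fin 3) ℝ)) '' H = K

namespace FiveAux

abbrev Mat3 := Matrix (Fin 3) (Fin 3) ℝ

/-! ### Conjugation-invariant properties -/

/-- Some element has trace different from 3. -/
def Inv1 (G : Set Mat3) : Prop := ∃ M ∈ G, Matrix.trace M ≠ 3
/-- Some nontrivial element satisfies `(M-1)² = 0`. -/
def Inv2 (G : Set Mat3) : Prop := ∃ M ∈ G, M ≠ 1 ∧ (M - 1) * (M - 1) = 0
/-- Some element satisfies `(M-1)² ≠ 0`. -/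
def Inv3 (G : Set Mat3) : Prop := ∃ M ∈ G, (M - 1) * (M - 1) ≠ 0
/-- There are two linearly independent vectors fixed by the whole group. -/
def Inv4 (G : Set Mat3) : Prop := ∃ v w : Fin 3 → ℝ, LinearIndependent ℝ ![v, w] ∧
  ∀ M ∈ G, M.mulVec v = v ∧ M.mulVec w = w

lemma conj_cancel (P : GL (Fin 3) ℝ) (M : Mat3) :
    ((P⁻¹ : GL (Fin 3) ℝ) : Mat3) * ((P : Mat3) * M * ((P⁻¹ : GL (Fin 3) ℝ) : Mat3)) * (P : Mat3)
      = M := by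
  have h1 : ((P⁻¹ : GL (Fin 3) ℝ) : Mat3) * (P : Mat3) = 1 := P.inv_mul
  calc ((P⁻¹ : GL (Fin 3) ℝ) : Mat3) * ((P : Mat3) * M * ((P⁻¹ : GL (Fin 3) ℝ) : Mat3)) * (P : Mat3)
      = (((P⁻¹ : GL (Fin 3) ℝ) : Mat3) * (P : Mat3)) * M *
        (((P⁻¹ : GL (Fin 3) ℝ) : Mat3) * (P : Mat3)) := by noncomm_ring
    _ = M := by rw [h1]; simp

lemma glconj_symm {H K : Set Mat3} (h : IsGLConjugate H K) : IsGLConjugate K H := by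
  obtain ⟨P, hP⟩ := h
  refine ⟨P⁻¹, ?_⟩
  subst hP
  rw [Set.image_image]
  convert Set.image_id H using 2 with M
  simp only [inv_inv]
  exact conj_cancel P M

lemma sub_one_conj (P : GL (Fin 3) ℝ) (M : Mat3) :
    (P : Mat3) * M * ((P⁻¹ : GL (Fin 3) ℝ) : Mat3) - 1
      = (P : Mat3) * (M - 1) * ((P⁻¹ : GL (Fin 3) ℝ) : Mat3) := by
  have h2 : (P : Mat3) * ((P⁻¹ : GL (Fin 3) ℝ) : Mat3) = 1 := P.mul_inv
  rw [mul_sub, sub_mul, mul_one, h2]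

lemma conj_eq_zero_iff (P : GL (Fin 3) ℝ) (A : Mat3) :
    (P : Mat3) * A * ((P⁻¹ : GL (Fin 3) ℝ) : Mat3) = 0 ↔ A = 0 := by
  constructor
  · intro h
    have h1 : ((P⁻¹ : GL (Fin 3) ℝ) : Mat3) * (P : Mat3) = 1 := P.inv_mul
    calc A = (((P⁻¹ : GL (Fin 3) ℝ) : Mat3) * (P : Mat3)) * A *
          (((P⁻¹ : GL (Fin 3) ℝ) : Mat3) * (P : Mat3)) := by rw [h1]; simp
      _ = ((P⁻¹ : GL (Fin 3) ℝ) : Mat3) * ((P : Mat3) * A * ((P⁻¹ : GL (Fin 3) ℝ) : Mat3)) *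
          (P : Mat3) := by noncomm_ring
      _ = 0 := by rw [h]; simp
  · rintro rfl; simp

lemma conjsq (P : GL (Fin 3) ℝ) (M : Mat3) :
    ((P : Mat3) * M * ((P⁻¹ : GL (Fin 3) ℝ) : Mat3) - 1) *
      ((P : Mat3) * M * ((P⁻¹ : GL (Fin 3) ℝ) : Mat3) - 1)
      = (P : Mat3) * ((M - 1) * (M - 1)) * ((P⁻¹ : GL (Fin 3) ℝ) : Mat3) := by
  rw [sub_one_conj]
  have h1 : ((P⁻¹ : GL (Fin 3) ℝ) : Mat3) * (P : Mat3) = 1 := P.inv_mul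
  calc ((P : Mat3) * (M - 1) * ((P⁻¹ : GL (Fin 3) ℝ) : Mat3)) *
        ((P : Mat3) * (M - 1) * ((P⁻¹ : GL (Fin 3) ℝ) : Mat3))
      = (P : Mat3) * (M - 1) * (((P⁻¹ : GL (Fin 3) ℝ) : Mat3) * (P : Mat3)) * (M - 1) *
        ((P⁻¹ : GL (Fin 3) ℝ) : Mat3) := by noncomm_ring
    _ = _ := by rw [h1]; noncomm_ring

lemma inv1_of_conj {H K : Set Mat3} (h : IsGLConjugate H K) (h1 : Inv1 H) : Inv1 K := by
  obtain ⟨P, rfl⟩ := h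
  obtain ⟨M, hM, ht⟩ := h1
  refine ⟨_, Set.mem_image_of_mem _ hM, ?_⟩
  have : Matrix.trace ((P : Mat3) * M * ((P⁻¹ : GL (Fin 3) ℝ) : Mat3)) = Matrix.trace M := by
    rw [Matrix.trace_mul_comm, ← mul_assoc, P.inv_mul, one_mul]
  rwa [this]

lemma inv2_of_conj {H K : Set Mat3} (h : IsGLConjugate H K) (h1 : Inv2 H) : Inv2 K := by
  obtain ⟨P, rfl⟩ := h
  obtain ⟨M, hM, hne, hsq⟩ := h1
  refine ⟨_, Set.mem_image_of_mem _ hM, ?_, ?_⟩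
  · intro h1
    apply hne
    have : (P : Mat3) * M * ((P⁻¹ : GL (Fin 3) ℝ) : Mat3) - 1 = 0 := by rw [h1]; simp
    rw [sub_one_conj, conj_eq_zero_iff] at this
    rwa [sub_eq_zero] at this
  · rw [conjsq, hsq]; simp

lemma inv3_of_conj {H K : Set Mat3} (h : IsGLConjugate H K) (h1 : Inv3 H) : Inv3 K := by
  obtain ⟨P, rfl⟩ := h
  obtain ⟨M, hM, ht⟩ := h1
  refine ⟨_, Set.mem_image_of_mem _ hM, ?_⟩
  rw [conjsq]
  intro hz
  exact ht ((conj_eq_zero_iff P _).1 hz)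

lemma inv4_of_conj {H K : Set Mat3} (h : IsGLConjugate H K) (h1 : Inv4 H) : Inv4 K := by
  obtain ⟨P, rfl⟩ := h
  obtain ⟨v, w, hli, hfix⟩ := h1
  refine ⟨(P : Mat3).mulVec v, (P : Mat3).mulVec w, ?_, ?_⟩
  · rw [LinearIndependent.pair_iff] at hli ⊢
    intro s t hst
    apply hli
    have : (P : Mat3).mulVec (s • v + t • w) = 0 := by
      rw [Matrix.mulVec_add, Matrix.mulVec_smul, Matrix.mulVec_smul, hst]
    have h2 : ((P⁻¹ : GL (Fin 3) ℝ) : Mat3).mulVec ((P : Mat3).mulVec (s • v + t • w))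
        = ((P⁻¹ : GL (Fin 3) ℝ) : Mat3).mulVec 0 := by rw [this]
    rwa [Matrix.mulVec_mulVec, P.inv_mul, Matrix.one_mulVec, Matrix.mulVec_zero] at h2
  · rintro N ⟨M, hM, rfl⟩
    obtain ⟨hv, hw⟩ := hfix M hM
    have key : ∀ u : Fin 3 → ℝ, M.mulVec u = u →
        ((P : Mat3) * M * ((P⁻¹ : GL (Fin 3) ℝ) : Mat3)).mulVec ((P : Mat3).mulVec u)
          = (P : Mat3).mulVec u := by
      intro u hu
      rw [Matrix.mulVec_mulVec, mul_assoc ((P : Mat3) * M), P.inv_mul, mul_one,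
        ← Matrix.mulVec_mulVec, hu]
    exact ⟨key v hv, key w hw⟩

/-! ### Evaluating the invariants on the five groups -/

lemma diag3 (a b c : ℝ) : Matrix.diagonal ![a, b, c] = !![a,0,0;0,b,0;0,0,c] := by
  ext i j; fin_cases i <;> fin_cases j <;>
    simp [Matrix.diagonal, Matrix.vecHead, Matrix.vecTail]

lemma inv1_C : Inv1 CartanC := by
  refine ⟨_, ⟨2, 2, by norm_num, by norm_num, rfl⟩, ?_⟩
  rw [diag3, Matrix.trace_fin_three]
  simp <;> norm_num

lemma inv1_F : Inv1 groupF := by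
  refine ⟨_, ⟨2, 0, by norm_num, rfl⟩, ?_⟩
  rw [Matrix.trace_fin_three]
  simp <;> norm_num

lemma not_inv1_N1 : ¬ Inv1 groupN1 := by
  rintro ⟨M, ⟨s, t, rfl⟩, h⟩
  apply h; rw [Matrix.trace_fin_three]; simp <;> norm_num

lemma not_inv1_N2 : ¬ Inv1 groupN2 := by
  rintro ⟨M, ⟨s, t, rfl⟩, h⟩
  apply h; rw [Matrix.trace_fin_three]; simp <;> norm_num

lemma not_inv1_N3 : ¬ Inv1 groupN3 := by
  rintro ⟨M, ⟨s, t, rfl⟩, h⟩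
  apply h; rw [Matrix.trace_fin_three]; simp <;> norm_num

lemma inv2_F : Inv2 groupF := by
  refine ⟨_, ⟨1, 1, by norm_num, rfl⟩, ?_, ?_⟩
  · intro h
    have := congrFun (congrFun h 0) 1
    norm_num [Matrix.one_apply] at this
  · ext i j
    fin_cases i <;> fin_cases j <;>
      simp [Matrix.mul_apply, Fin.sum_univ_three, Matrix.one_apply, Matrix.vecHead,
        Matrix.vecTail]

lemma not_inv2_C : ¬ Inv2 CartanC := by
  rintro ⟨M, ⟨a, b, ha, hb, rfl⟩, hne, hsq⟩
  rw [diag3] at hne hsq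
  have h00 := congrFun (congrFun hsq 0) 0
  have h11 := congrFun (congrFun hsq 1) 1
  simp [Matrix.mul_apply, Fin.sum_univ_three, Matrix.one_apply, Matrix.vecHead,
    Matrix.vecTail] at h00 h11
  have ha1 : a = 1 := by nlinarith [sq_nonneg (a - 1)]
  have hb1 : b = 1 := by nlinarith [sq_nonneg (b - 1)]
  apply hne
  ext i j
  fin_cases i <;> fin_cases j <;>
    simp [Matrix.one_apply, Matrix.vecHead, Matrix.vecTail] <;> norm_num [ha1, hb1]

lemma inv3_N1 : Inv3 groupN1 := by
  refine ⟨_, ⟨1, 0, rfl⟩, ?_⟩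
  intro h
  have := congrFun (congrFun h 0) 2
  simp [Matrix.mul_apply, Fin.sum_univ_three, Matrix.one_apply] at this

lemma not_inv3_N2 : ¬ Inv3 groupN2 := by
  rintro ⟨M, ⟨s, t, rfl⟩, h⟩
  apply h
  ext i j
  fin_cases i <;> fin_cases j <;>
    simp [Matrix.mul_apply, Fin.sum_univ_three, Matrix.one_apply, Matrix.vecHead, Matrix.vecTail]

lemma not_inv3_N3 : ¬ Inv3 groupN3 := by
  rintro ⟨M, ⟨s, t, rfl⟩, h⟩
  apply h
  ext i j
  fin_cases i <;> fin_cases j <;>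
    simp [Matrix.mul_apply, Fin.sum_univ_three, Matrix.one_apply, Matrix.vecHead, Matrix.vecTail]

lemma inv4_N3 : Inv4 groupN3 := by
  refine ⟨![1,0,0], ![0,1,0], ?_, ?_⟩
  · rw [LinearIndependent.pair_iff]
    intro s t hst
    constructor
    · have := congrFun hst 0; simpa using this
    · have := congrFun hst 1; simpa using this
  · rintro M ⟨s, t, rfl⟩
    constructor <;> (ext i; fin_cases i <;>
      simp [Matrix.mulVec, dotProduct, Fin.sum_univ_three])

lemma not_inv4_N2 : ¬ Inv4 groupN2 := by
  rintro ⟨v, w, hli, hfix⟩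
  rw [LinearIndependent.pair_iff] at hli
  have fix_form : ∀ u : Fin 3 → ℝ, (∀ M ∈ groupN2, M.mulVec u = u) → u 1 = 0 ∧ u 2 = 0 := by
    intro u hu
    have h1 := congrFun (hu !![1,1,0;0,1,0;0,0,1] ⟨1, 0, by norm_num⟩) 0
    have h2 := congrFun (hu !![1,0,1;0,1,0;0,0,1] ⟨0, 1, by norm_num⟩) 0
    simp [Matrix.mulVec, dotProduct, Fin.sum_univ_three] at h1 h2
    constructor <;> linarith
  obtain ⟨hv1, hv2⟩ := fix_form v (fun M hM => (hfix M hM).1)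
  obtain ⟨hw1, hw2⟩ := fix_form w (fun M hM => (hfix M hM).2)
  have key := hli (w 0) (-(v 0)) (by
    ext i; fin_cases i <;> simp [hv1, hv2, hw1, hw2] <;> ring)
  have hv0 : v 0 = 0 := by have := key.2; linarith
  have hv : v = 0 := by ext i; fin_cases i <;> simp [hv0, hv1, hv2]
  have := hli 1 0 (by rw [hv]; simp)
  exact one_ne_zero this.1

/-! ### Non-conjugacy from invariants -/

lemma not_conj_left {Inv : Set Mat3 → Prop}
    (hinv : ∀ {A B : Set Mat3}, IsGLConjugate A B → Inv A → Inv B)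
    {H K : Set Mat3} (hH : ¬ Inv H) (hK : Inv K) : ¬ IsGLConjugate H K :=
  fun h => hH (hinv (glconj_symm h) hK)

lemma not_conj_right {Inv : Set Mat3 → Prop}
    (hinv : ∀ {A B : Set Mat3}, IsGLConjugate A B → Inv A → Inv B)
    {H K : Set Mat3} (hH : Inv H) (hK : ¬ Inv K) : ¬ IsGLConjugate H K :=
  fun h => hK (hinv h hH)

end FiveAux

/-- The five groups `C, F, N₁, N₂, N₃` are pairwise non-conjugate in `GL₃(ℝ)`. -/
theorem five_groups_pairwise_nonconjugate :
    ∀ H ∈ [CartanC, groupF, groupN1, groupN2, groupN3],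
    ∀ K ∈ [CartanC, groupF, groupN1, groupN2, groupN3],
      H ≠ K → ¬ IsGLConjugate H K := by
  intro H hH K hK hne
  open FiveAux in
  simp only [List.mem_cons, List.not_mem_nil, or_false] at hH hK
  rcases hH with rfl | rfl | rfl | rfl | rfl <;>
    rcases hK with rfl | rfl | rfl | rfl | rfl <;>
    first
    | exact absurd rfl hne
    | exact FiveAux.not_conj_left FiveAux.inv2_of_conj FiveAux.not_inv2_C FiveAux.inv2_F
    | exact FiveAux.not_conj_right FiveAux.inv2_of_conj FiveAux.inv2_F FiveAux.not_inv2_C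
    | exact FiveAux.not_conj_right FiveAux.inv1_of_conj FiveAux.inv1_C FiveAux.not_inv1_N1
    | exact FiveAux.not_conj_right FiveAux.inv1_of_conj FiveAux.inv1_C FiveAux.not_inv1_N2
    | exact FiveAux.not_conj_right FiveAux.inv1_of_conj FiveAux.inv1_C FiveAux.not_inv1_N3
    | exact FiveAux.not_conj_right FiveAux.inv1_of_conj FiveAux.inv1_F FiveAux.not_inv1_N1
    | exact FiveAux.not_conj_right FiveAux.inv1_of_conj FiveAux.inv1_F FiveAux.not_inv1_N2
    | exact FiveAux.not_conj_right FiveAux.inv1_of_conj FiveAux.inv1_F FiveAux.not_inv1_N3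
    | exact FiveAux.not_conj_left FiveAux.inv1_of_conj FiveAux.not_inv1_N1 FiveAux.inv1_C
    | exact FiveAux.not_conj_left FiveAux.inv1_of_conj FiveAux.not_inv1_N2 FiveAux.inv1_C
    | exact FiveAux.not_conj_left FiveAux.inv1_of_conj FiveAux.not_inv1_N3 FiveAux.inv1_C
    | exact FiveAux.not_conj_left FiveAux.inv1_of_conj FiveAux.not_inv1_N1 FiveAux.inv1_F
    | exact FiveAux.not_conj_left FiveAux.inv1_of_conj FiveAux.not_inv1_N2 FiveAux.inv1_F
    | exact FiveAux.not_conj_left FiveAux.inv1_of_conj FiveAux.not_inv1_N3 FiveAux.inv1_F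
    | exact FiveAux.not_conj_right FiveAux.inv3_of_conj FiveAux.inv3_N1 FiveAux.not_inv3_N2
    | exact FiveAux.not_conj_right FiveAux.inv3_of_conj FiveAux.inv3_N1 FiveAux.not_inv3_N3
    | exact FiveAux.not_conj_left FiveAux.inv3_of_conj FiveAux.not_inv3_N2 FiveAux.inv3_N1
    | exact FiveAux.not_conj_left FiveAux.inv3_of_conj FiveAux.not_inv3_N3 FiveAux.inv3_N1
    | exact FiveAux.not_conj_left FiveAux.inv4_of_conj FiveAux.not_inv4_N2 FiveAux.inv4_N3
    | exact FiveAux.not_conj_right FiveAux.inv4_of_conj FiveAux.inv4_N3 FiveAux.not_inv4_N2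
end

section
/- Let δ, ε, η be hyperreal numbers with δ infinitesimal, |η| ≤ |δ|, |ε| ≤ |δ|, and η ≠ 0, and let P be the hyperreal matrix with rows (1, 1, 1), (0, δ, ε), (0, 0, η). Let C be the group of positive diagonal hyperreal matrices diag(a, b, 1/(ab)) in SL_3(*R). Then every matrix in sh(Fin(P C P^{-1})) is unipotent; i.e., if M ∈ P C P^{-1} has all entries finite, then the shadow of M has all three eigenvalues equal to 1. -/
open Hyperreal Matrix

set_option maxHeartbeats 1000000

theorem infinitesimal_of_abs_le' {x y : Hyperreal} (hy : Infinitesimal y)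
    (h : |x| ≤ |y|) : Infinitesimal x := by
  rw [infinitesimal_def] at hy ⊢
  intro r hr
  obtain ⟨h1, h2⟩ := hy r hr
  exact abs_lt.mp (lt_of_le_of_lt h (abs_lt.mpr ⟨h1, h2⟩))

/-- If `δ` is infinitesimal, `|η| ≤ |δ|`, `|ep| ≤ |δ|`, `η ≠ 0`, and
`P = !![1,1,1; 0,δ,ep; 0,0,η]`, then the shadow of any finite matrix in
`P C P⁻¹` (with `C` the positive diagonal group in SL₃(*ℝ)) is unipotent:
its characteristic polynomial is `(X - 1)³`. -/
theorem shadow_of_conjugate_is_unipotent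
    (δ ep η : Hyperreal) (hδ : Infinitesimal δ)
    (hη : |η| ≤ |δ|) (hep : |ep| ≤ |δ|) (hη0 : η ≠ 0)
    (P : Matrix (Fin 3) (Fin 3) Hyperreal)
    (hP : P = !![1, 1, 1; 0, δ, ep; 0, 0, η])
    (a b : Hyperreal) (ha : 0 < a) (hb : 0 < b)
    (M : Matrix (Fin 3) (Fin 3) Hyperreal)
    (hM : M = P * Matrix.diagonal ![a, b, 1 / (a * b)] * P⁻¹)
    (hfin : ∀ i j : Fin 3, ¬ (M i j).Infinite) :
    (Matrix.of fun i j : Fin 3 => st (M i j)).charpoly =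
      (Polynomial.X - Polynomial.C 1) ^ 3 := by
  have hδ0 : δ ≠ 0 := by
    rintro rfl
    simp only [abs_zero, abs_nonpos_iff] at hη
    exact hη0 hη
  have hηinf : Infinitesimal η := infinitesimal_of_abs_le' hδ hη
  have hepinf : Infinitesimal ep := infinitesimal_of_abs_le' hδ hep
  have hab0 : a * b ≠ 0 := by positivity
  obtain ⟨c, hc⟩ : ∃ c : Hyperreal, 1 / (a * b) = c := ⟨_, rfl⟩
  rw [hc] at hM
  have hPinv : P⁻¹ = !![1, -1/δ, (ep-δ)/(δ*η); 0, 1/δ, -ep/(δ*η); 0, 0, 1/η] := by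
    apply Matrix.inv_eq_right_inv
    rw [hP, Matrix.mul_fin_three, Matrix.one_fin_three]
    ext i j
    fin_cases i <;> fin_cases j <;> simp <;> field_simp <;> ring
  have hMeq : M = !![a, (b-a)/δ, ep*(a-b)/(δ*η) + (c-a)/η;
      0, b, ep*(c-b)/η; 0, 0, c] := by
    rw [hM, hPinv, hP]
    have hd : Matrix.diagonal ![a, b, c] = !![a,0,0;0,b,0;0,0,c] := by
      ext i j
      fin_cases i <;> fin_cases j <;>
        simp [Matrix.diagonal_apply, Matrix.vecHead, Matrix.vecTail]
    rw [hd, Matrix.mul_fin_three, Matrix.mul_fin_three]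
    ext i j
    fin_cases i <;> fin_cases j <;> simp <;> field_simp <;> ring
  have fina : ¬ Infinite a := by have := hfin 0 0; rw [hMeq] at this; simpa using this
  have finb : ¬ Infinite b := by have := hfin 1 1; rw [hMeq] at this; simpa using this
  have finc : ¬ Infinite c := by have := hfin 2 2; rw [hMeq] at this; simpa using this
  have fin01 : ¬ Infinite ((b-a)/δ) := by
    have := hfin 0 1; rw [hMeq] at this; simpa using this
  have fin02 : ¬ Infinite (ep*(a-b)/(δ*η) + (c-a)/η) := by
    have := hfin 0 2; rw [hMeq] at this; simpa using this
  have hba : Infinitesimal (b - a) := by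
    have h : b - a = δ * ((b-a)/δ) := by field_simp
    rw [h]
    simpa [Infinitesimal] using IsSt.mul hδ (isSt_st' fin01)
  have hca : Infinitesimal (c - a) := by
    have h : c - a = η * (ep*(a-b)/(δ*η) + (c-a)/η) + ep * ((b-a)/δ) := by
      field_simp; ring
    rw [h]
    have h1 : IsSt (η * (ep*(a-b)/(δ*η) + (c-a)/η)) 0 := by
      simpa using IsSt.mul hηinf (isSt_st' fin02)
    have h2 : IsSt (ep * ((b-a)/δ)) 0 := by
      simpa using IsSt.mul hepinf (isSt_st' fin01)
    simpa [Infinitesimal] using h1.add h2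
  set r : ℝ := st a with hr
  have hsa : IsSt a r := isSt_st' fina
  have hsb : IsSt b r := by simpa using hsa.add hba
  have hsc : IsSt c r := by simpa using hsa.add hca
  have habc : a * b * c = 1 := by rw [← hc]; field_simp
  have hr3 : r * r * r = 1 := by
    have h := (hsa.mul hsb).mul hsc
    rw [habc] at h
    have h1 : IsSt 1 1 := by simpa using isSt_refl_real 1
    have := h.st_eq
    rw [h1.st_eq] at this
    linarith
  have hr1 : r = 1 := by
    have key : (r - 1) * (r^2 + r + 1) = 0 := by nlinarith [hr3]
    have pos : r^2 + r + 1 > 0 := by nlinarith [sq_nonneg (2*r+1)]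
    rcases mul_eq_zero.mp key with h | h
    · linarith
    · linarith
  have htri : (Matrix.of fun i j : Fin 3 => st (M i j)).BlockTriangular id := by
    have hst0 : st (0:Hyperreal) = 0 := by rw [← Hyperreal.coe_zero, st_id_real]
    intro i j hij
    fin_cases i <;> fin_cases j <;>
      first
        | exact absurd hij (by decide)
        | exact show st (M _ _) = 0 by rw [hMeq]; simp [Matrix.vecHead, Matrix.vecTail, hst0]
  rw [Matrix.charpoly_of_upperTriangular _ htri]
  have d0 : st (M 0 0) = 1 := by rw [hMeq]; simpa using hr1 ▸ hsa.st_eq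
  have d1 : st (M 1 1) = 1 := by rw [hMeq]; simpa using hr1 ▸ hsb.st_eq
  have d2 : st (M 2 2) = 1 := by rw [hMeq]; simpa using hr1 ▸ hsc.st_eq
  rw [Fin.prod_univ_three]
  simp only [Matrix.of_apply, d0, d1, d2]
  ring
end

section
/- Let δ be a nonzero hyperreal, and define G(δ) = { M(a) : a ∈ *R, a > 0 } ≤ SL_2(*R) where M(a) has rows (a, (a − 1/a)/δ), (0, 1/a). If δ is infinitesimal, then sh(Fin(G(δ))) equals the real parabolic group { rows (1, t), (0, 1) : t ∈ R }. If δ is appreciable (finite and not infinitesimal), then sh(Fin(G(δ))) is conjugate in SL_2(R) to the positive diagonal group { diag(a, 1/a) : a > 0 }. -/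
open Hyperreal Matrix

/-- The conjugate `G(δ)` of the diagonal group of SL₂(*ℝ) stabilizing
`[1:0]` and `[1:δ]`. -/
noncomputable def Gdelta (δ : Hyperreal) : Set (Matrix (Fin 2) (Fin 2) Hyperreal) :=
  {M | ∃ a : Hyperreal, 0 < a ∧ M = !![a, (a - 1 / a) / δ; 0, 1 / a]}

/-- The shadow of the finite part of a set of hyperreal matrices. -/
def shFin (S : Set (Matrix (Fin 2) (Fin 2) Hyperreal)) :
    Set (Matrix (Fin 2) (Fin 2) ℝ) :=
  {A | ∃ M ∈ S, ∀ i j : Fin 2, IsSt (M i j) (A i j)}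

lemma isSt_zero' : IsSt (0 : Hyperreal) (0 : ℝ) := by
  have h0 : IsSt ((0:ℝ):Hyperreal) (0:ℝ) := isSt_refl_real 0
  rwa [Hyperreal.coe_zero] at h0

lemma aux_pos_inv {a : Hyperreal} {r r' : ℝ} (ha : 0 < a) (h1 : IsSt a r)
    (h2 : IsSt (1 / a) r') : 0 < r ∧ r' = 1 / r := by
  have hane : a ≠ 0 := ne_of_gt ha
  have hni : ¬ Infinitesimal a := by
    intro hinf
    have : Infinite a⁻¹ := (infinitesimal_iff_infinite_inv hane).1 hinf
    rw [← one_div] at this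
    exact h2.not_infinite this
  have hinv : IsSt a⁻¹ r⁻¹ := IsSt.inv hni h1
  rw [one_div] at h2
  have hr' : r' = r⁻¹ := h2.unique hinv
  have hr0 : 0 ≤ r := isSt_zero'.le h1 ha.le
  have hrne : r ≠ 0 := fun h => hni (by rw [h] at h1; exact h1)
  exact ⟨lt_of_le_of_ne hr0 (Ne.symm hrne), by rw [hr', one_div]⟩

lemma coe_mul_inf_infinitesimal {δ : Hyperreal} (hinf : Infinitesimal δ) (c : ℝ) :
    Infinitesimal ((c : Hyperreal) * δ) := by
  have : IsSt ((c : Hyperreal) * δ) (c * 0) := (isSt_refl_real c).mul hinf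
  simp only [mul_zero] at this
  exact this

lemma diag_eq (r : ℝ) : Matrix.diagonal ![r, 1 / r] = !![r, 0; 0, 1/r] := by
  ext i j
  fin_cases i <;> fin_cases j <;> simp [Matrix.diagonal]

/-- If `δ` is infinitesimal then `sh(Fin(G(δ)))` is the parabolic group; if
`δ` is appreciable then `sh(Fin(G(δ)))` is conjugate in SL₂(ℝ) to the positive
diagonal group. -/
theorem shadow_of_Gdelta (δ : Hyperreal) (hδ0 : δ ≠ 0) :
    (Infinitesimal δ →
      shFin (Gdelta δ) = {A | ∃ t : ℝ, A = !![1, t; 0, 1]}) ∧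
    (¬ Infinitesimal δ → ¬ δ.Infinite →
      ∃ P : Matrix.SpecialLinearGroup (Fin 2) ℝ,
        (fun A => (P : Matrix (Fin 2) (Fin 2) ℝ) * A *
          ((P⁻¹ : Matrix.SpecialLinearGroup (Fin 2) ℝ) :
            Matrix (Fin 2) (Fin 2) ℝ)) '' shFin (Gdelta δ) =
          {A : Matrix (Fin 2) (Fin 2) ℝ | ∃ a : ℝ, 0 < a ∧
            A = Matrix.diagonal ![a, 1 / a]}) := by
  constructor
  · -- infinitesimal case
    intro hinf
    ext A
    constructor
    · rintro ⟨M, ⟨a, ha, rfl⟩, hIs⟩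
      have hane : a ≠ 0 := ne_of_gt ha
      have h00 : IsSt a (A 0 0) := by simpa using hIs 0 0
      have h01 : IsSt ((a - 1 / a) / δ) (A 0 1) := by simpa using hIs 0 1
      have h10 : IsSt (0 : Hyperreal) (A 1 0) := by simpa using hIs 1 0
      have h11 : IsSt (1 / a) (A 1 1) := by simpa using hIs 1 1
      obtain ⟨hr, hr'⟩ := aux_pos_inv ha h00 h11
      have hA10 : A 1 0 = 0 := h10.unique isSt_zero'
      have hd : IsSt (((a - 1 / a) / δ) * δ) ((A 0 1) * 0) := h01.mul hinf
      rw [div_mul_cancel₀ _ hδ0, mul_zero] at hd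
      have hsub : IsSt (a - 1 / a) (A 0 0 - A 1 1) := h00.sub h11
      have heq : A 0 0 - A 1 1 = 0 := hsub.unique hd
      have hA00 : A 0 0 = 1 := by
        rw [hr'] at heq
        have h2 : A 0 0 * A 0 0 = 1 := by field_simp at heq; linarith
        nlinarith
      have hA11 : A 1 1 = 1 := by rw [hr', hA00]; norm_num
      refine ⟨A 0 1, ?_⟩
      conv_lhs => rw [eta_fin_two A]
      rw [hA00, hA10, hA11]
    · rintro ⟨t, rfl⟩
      set e : Hyperreal := (t : Hyperreal) * δ / 2 with he_def
      have he : Infinitesimal e := by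
        have : e = ((t/2 : ℝ) : Hyperreal) * δ := by rw [he_def]; push_cast; ring
        rw [this]; exact coe_mul_inf_infinitesimal hinf _
      set a : Hyperreal := 1 + e with ha_def
      have haIs : IsSt a 1 := by
        have : IsSt ((1:ℝ):Hyperreal) 1 := isSt_refl_real 1
        rw [Hyperreal.coe_one] at this
        simpa using this.add he
      have ha : 0 < a := by
        have := lt_neg_of_pos_of_infinitesimal he 1 one_pos
        rw [ha_def]
        push_cast at this
        linarith
      have hane : a ≠ 0 := ne_of_gt ha
      have hani : ¬ Infinitesimal a := fun h => one_ne_zero (haIs.unique h)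
      have hainv : IsSt (1 / a) 1 := by
        rw [one_div]
        simpa using IsSt.inv hani haIs
      have hb : IsSt ((a - 1 / a) / δ) t := by
        have key : (a - 1 / a) / δ = ((t : Hyperreal) + ((t*t/4 : ℝ) : Hyperreal) * δ) * a⁻¹ := by
          have hane' : (1:Hyperreal) + (t:Hyperreal) * δ / 2 ≠ 0 := by
            rw [← he_def, ← ha_def]; exact hane
          have h2 : (2:Hyperreal) + (t:Hyperreal) * δ ≠ 0 := by
            intro h
            apply hane'
            have h' : (1:Hyperreal) + (t:Hyperreal) * δ / 2 = (2 + (t:Hyperreal) * δ) / 2 := by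
              ring
            rw [h', h]
            simp
          have h8 : (8:Hyperreal) + (t:Hyperreal) * δ * 4 ≠ 0 := by
            intro h; apply h2; linear_combination h / 4
          rw [ha_def, he_def]
          push_cast
          field_simp
          push_cast
          ring
        rw [key]
        have h1 : IsSt ((t : Hyperreal) + ((t*t/4 : ℝ) : Hyperreal) * δ) (t + 0) :=
          (isSt_refl_real t).add (coe_mul_inf_infinitesimal hinf _)
        have h2 : IsSt a⁻¹ 1⁻¹ := IsSt.inv hani haIs
        simpa using h1.mul h2
      refine ⟨!![a, (a - 1 / a) / δ; 0, 1 / a], ⟨a, ha, rfl⟩, ?_⟩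
      intro i j
      fin_cases i <;> fin_cases j <;>
        simp only [Matrix.cons_val_zero, Matrix.cons_val_one, Matrix.head_cons,
          Matrix.head_fin_const, Fin.mk_zero, Fin.mk_one, Matrix.cons_val', Matrix.empty_val',
          Matrix.cons_val_fin_one]
      · exact haIs
      · exact hb
      · exact isSt_zero'
      · exact hainv
  · -- appreciable case
    intro hni hnI
    set s : ℝ := st δ with hs_def
    have hsIs : IsSt δ s := isSt_st' hnI
    have hs0 : s ≠ 0 := fun h => hni (by rw [h] at hsIs; exact hsIs)
    refine ⟨⟨!![1, s⁻¹; 0, 1], by simp [Matrix.det_fin_two_of]⟩, ?_⟩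
    have hPinv : ((⟨!![1, s⁻¹; 0, 1], by simp [Matrix.det_fin_two_of]⟩ :
        Matrix.SpecialLinearGroup (Fin 2) ℝ)⁻¹ : Matrix.SpecialLinearGroup (Fin 2) ℝ) =
        (!![1, -s⁻¹; 0, 1] : Matrix (Fin 2) (Fin 2) ℝ) := by
      change Matrix.adjugate !![1, s⁻¹; 0, 1] = _
      simp [Matrix.adjugate_fin_two_of]
    ext B
    simp only [Set.mem_image, Set.mem_setOf_eq]
    constructor
    · rintro ⟨A, ⟨M, ⟨a, ha, rfl⟩, hIs⟩, rfl⟩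
      have hane : a ≠ 0 := ne_of_gt ha
      have h00 : IsSt a (A 0 0) := by simpa using hIs 0 0
      have h01 : IsSt ((a - 1 / a) / δ) (A 0 1) := by simpa using hIs 0 1
      have h10 : IsSt (0 : Hyperreal) (A 1 0) := by simpa using hIs 1 0
      have h11 : IsSt (1 / a) (A 1 1) := by simpa using hIs 1 1
      obtain ⟨hr, hr'⟩ := aux_pos_inv ha h00 h11
      set r : ℝ := A 0 0 with hr_def
      have hA10 : A 1 0 = 0 := h10.unique isSt_zero'
      have hA01 : A 0 1 = (r - 1/r) * s⁻¹ := by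
        have hq : IsSt ((a - 1 / a) / δ) ((r - 1/r) * s⁻¹) := by
          rw [div_eq_mul_inv]
          exact (h00.sub (hr' ▸ h11)).mul (IsSt.inv hni hsIs)
        exact h01.unique hq
      refine ⟨r, hr, ?_⟩
      rw [eta_fin_two A, hA10, hA01, ← hr_def, hr', hPinv, diag_eq]
      ext i j
      fin_cases i <;> fin_cases j <;> simp [Matrix.mul_fin_two] <;> (try field_simp) <;> ring
    · rintro ⟨r, hrpos, rfl⟩
      have hrne : r ≠ 0 := ne_of_gt hrpos
      set a : Hyperreal := (r : Hyperreal) with ha_def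
      have ha : 0 < a := by rwa [ha_def, Hyperreal.coe_pos]
      refine ⟨!![r, (r - 1/r) * s⁻¹; 0, 1/r], ?_, ?_⟩
      · refine ⟨!![a, (a - 1 / a) / δ; 0, 1 / a], ⟨a, ha, rfl⟩, ?_⟩
        intro i j
        fin_cases i <;> fin_cases j <;>
          simp only [Matrix.cons_val_zero, Matrix.cons_val_one, Matrix.head_cons,
            Matrix.head_fin_const, Fin.mk_zero, Fin.mk_one, Matrix.cons_val', Matrix.empty_val',
            Matrix.cons_val_fin_one]
        · exact isSt_refl_real r
        · rw [div_eq_mul_inv]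
          have h1 : IsSt (a - 1/a) (r - 1/r) := by
            have : a - 1/a = (((r - 1/r : ℝ)) : Hyperreal) := by rw [ha_def]; push_cast; ring
            rw [this]; exact isSt_refl_real _
          exact h1.mul (IsSt.inv hni hsIs)
        · exact isSt_zero'
        · have : (1 : Hyperreal) / a = (((1/r : ℝ)) : Hyperreal) := by rw [ha_def]; push_cast; ring
          rw [this]; exact isSt_refl_real _
      · rw [hPinv, diag_eq]
        ext i j
        fin_cases i <;> fin_cases j <;> simp [Matrix.mul_fin_two] <;> (try field_simp) <;> ring
end
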